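/- Let h₀ ≠ 0, μ ∈ ℝ, and let c be a real root of the quadratic equation 2c² − h₀·c + 4 = 0. Then on the open set where x − t²/2 + μ > 0, the function u(t,x) := c·√(x − t²/2 + μ) + t solves the generalized Burgers equation u_t + u·u_x + f(t,x)·u_xx = 0 with f(t,x) := h₀·(x − t²/2 + μ)^{3/2}. -/

import Mathlib

noncomputable def pt (u : ℝ × ℝ → ℝ) (t x : ℝ) : ℝ := deriv (fun s => u (s, x)) t
noncomputable def px (u : ℝ × ℝ → ℝ) (t x : ℝ) : ℝ := deriv (fun y => u (t, y)) x
noncomputable def pxx (u : ℝ × ℝ → ℝ) (t x : ℝ) : ℝ := deriv (fun y => px u t y) x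

lemma px_eq (c μ t x : ℝ) (hA : x - t ^ 2 / 2 + μ > 0) :
    deriv (fun y => c * Real.sqrt (y - t ^ 2 / 2 + μ) + t) x
      = c * (1 / (2 * Real.sqrt (x - t ^ 2 / 2 + μ))) := by
  have h1 : HasDerivAt (fun y : ℝ => y - t ^ 2 / 2 + μ) 1 x := by
    simpa using ((hasDerivAt_id x).sub_const (t ^ 2 / 2)).add_const μ
  have h2 : HasDerivAt (fun y : ℝ => Real.sqrt (y - t ^ 2 / 2 + μ))
      (1 / (2 * Real.sqrt (x - t ^ 2 / 2 + μ)) * 1) x :=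
    (Real.hasDerivAt_sqrt (ne_of_gt hA)).comp x h1
  have h3 := (h2.const_mul c).add_const t
  simpa using h3.deriv

set_option maxHeartbeats 1000000 in
theorem sqrt_solution (h₀ : ℝ) (hh₀ : h₀ ≠ 0) (μ c : ℝ)
    (hc : 2 * c ^ 2 - h₀ * c + 4 = 0) :
    ∀ t x : ℝ, x - t ^ 2 / 2 + μ > 0 →
      pt (fun p => c * Real.sqrt (p.2 - p.1 ^ 2 / 2 + μ) + p.1) t x
        + (c * Real.sqrt (x - t ^ 2 / 2 + μ) + t)
          * px (fun p => c * Real.sqrt (p.2 - p.1 ^ 2 / 2 + μ) + p.1) t x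
        + (h₀ * (x - t ^ 2 / 2 + μ) ^ ((3 : ℝ) / 2))
          * pxx (fun p => c * Real.sqrt (p.2 - p.1 ^ 2 / 2 + μ) + p.1) t x = 0 := by
  intro t x hA
  have hs : Real.sqrt (x - t ^ 2 / 2 + μ) > 0 := Real.sqrt_pos.2 hA
  have hs2 : Real.sqrt (x - t ^ 2 / 2 + μ) ^ 2 = x - t ^ 2 / 2 + μ := Real.sq_sqrt hA.le
  -- pt
  have hpt : pt (fun p => c * Real.sqrt (p.2 - p.1 ^ 2 / 2 + μ) + p.1) t x
      = c * (1 / (2 * Real.sqrt (x - t ^ 2 / 2 + μ)) * (0 - 2 * t ^ 1 / 2)) + 1 := by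
    have hp2 : HasDerivAt (fun s : ℝ => s ^ 2) (2 * t ^ 1) t := hasDerivAt_pow 2 t
    have h1 : HasDerivAt (fun s : ℝ => x - s ^ 2 / 2 + μ) (0 - 2 * t ^ 1 / 2) t :=
      (((hasDerivAt_const t x).sub (hp2.div_const 2)).add_const μ)
    have h2 : HasDerivAt (fun s : ℝ => Real.sqrt (x - s ^ 2 / 2 + μ))
        (1 / (2 * Real.sqrt (x - t ^ 2 / 2 + μ)) * (0 - 2 * t ^ 1 / 2)) t :=
      (Real.hasDerivAt_sqrt (ne_of_gt hA)).comp t h1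
    have h3 := (h2.const_mul c).add (hasDerivAt_id t)
    have := h3.deriv
    simp only [pt]
    simpa [Pi.add_def] using this
  -- px
  have hpx : px (fun p => c * Real.sqrt (p.2 - p.1 ^ 2 / 2 + μ) + p.1) t x
      = c * (1 / (2 * Real.sqrt (x - t ^ 2 / 2 + μ))) := by
    simpa [px] using px_eq c μ t x hA
  -- pxx
  have hpxx : pxx (fun p => c * Real.sqrt (p.2 - p.1 ^ 2 / 2 + μ) + p.1) t x
      = (c / 2) * (-(1 / (2 * Real.sqrt (x - t ^ 2 / 2 + μ)) * 1)
          / Real.sqrt (x - t ^ 2 / 2 + μ) ^ 2) := by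
    have hev : ∀ᶠ y in nhds x, 0 < y - t ^ 2 / 2 + μ := by
      have hcont : Continuous fun y : ℝ => y - t ^ 2 / 2 + μ := by continuity
      exact ContinuousAt.eventually_lt continuousAt_const hcont.continuousAt hA
    have heq : (fun y => px (fun p => c * Real.sqrt (p.2 - p.1 ^ 2 / 2 + μ) + p.1) t y)
        =ᶠ[nhds x] fun y => (c / 2) * (Real.sqrt (y - t ^ 2 / 2 + μ))⁻¹ := by
      filter_upwards [hev] with y hy
      have := px_eq c μ t y hy
      simp only [px]
      rw [this]
      field_simp
    rw [pxx, heq.deriv_eq]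
    have h1 : HasDerivAt (fun y : ℝ => y - t ^ 2 / 2 + μ) 1 x := by
      simpa using ((hasDerivAt_id x).sub_const (t ^ 2 / 2)).add_const μ
    have h2 : HasDerivAt (fun y : ℝ => Real.sqrt (y - t ^ 2 / 2 + μ))
        (1 / (2 * Real.sqrt (x - t ^ 2 / 2 + μ)) * 1) x :=
      (Real.hasDerivAt_sqrt (ne_of_gt hA)).comp x h1
    have h3 := (h2.inv (ne_of_gt hs)).const_mul (c / 2)
    exact h3.deriv
  have h32 : (x - t ^ 2 / 2 + μ) ^ ((3 : ℝ) / 2)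
      = (x - t ^ 2 / 2 + μ) * Real.sqrt (x - t ^ 2 / 2 + μ) := by
    rw [show ((3 : ℝ) / 2) = 1 + 1 / 2 by norm_num, Real.rpow_add hA, Real.rpow_one,
      ← Real.sqrt_eq_rpow]
  have h33 : Real.sqrt (x - t ^ 2 / 2 + μ) ^ 3
      = (x - t ^ 2 / 2 + μ) * Real.sqrt (x - t ^ 2 / 2 + μ) := by
    rw [pow_succ, hs2]
  rw [hpt, hpx, hpxx, h32, ← h33]
  have hsne : Real.sqrt (x - t ^ 2 / 2 + μ) ≠ 0 := ne_of_gt hs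
  revert hsne
  generalize Real.sqrt (x - t ^ 2 / 2 + μ) = s
  intro hsne
  field_simp
  linear_combination s * hc
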